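/- Let G be a finite group, N ⊴ G, and P ≤ Q two p-subgroups of G with [C_{Q,N}, P] ⊆ Q ∩ N = P ∩ N assumed, where C_{Q,N} = { g ∈ G : [g,Q] ⊆ Q ∩ N }. Then C_{Q,N} ≤ C_{P,N}, and moreover Q normalizes C_{P,N}, so that C_{P,N}Q = QC_{P,N} is a subgroup of G. -/

import Mathlib

open Pointwise
open scoped commutatorElement

/-- Let `G` be a finite group, `N ⊴ G`, and `P ⊴ Q` two `p`-subgroups of `G` with
`P ⊓ N`, `Q ⊓ N` Sylow `p`-subgroups of `N` and `Q ⊓ N = P ⊓ N`, and assume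
`[C_{Q,N}, P] ⊆ Q ⊓ N`, where `C_{R,N} = {g : [g,R] ⊆ R ⊓ N}`. Then
`C_{Q,N} ⊆ C_{P,N}`, `Q` normalizes `C_{P,N}`, so `C_{P,N}Q = QC_{P,N}` is a subgroup of `G`. -/
theorem stmt_3 {G : Type*} [Group G] [Finite G] (p : ℕ) [Fact p.Prime]
    (N P Q : Subgroup G) [N.Normal] (hP : IsPGroup p P) (hQ : IsPGroup p Q)
    (hPQ : P ≤ Q) (hPnormQ : ∀ q ∈ Q, ∀ x ∈ P, q * x * q⁻¹ ∈ P)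
    (hEq : Q ⊓ N = P ⊓ N)
    (hPSyl : ∃ S : Sylow p N, (S : Subgroup N) = (P ⊓ N).subgroupOf N)
    (hQSyl : ∃ S : Sylow p N, (S : Subgroup N) = (Q ⊓ N).subgroupOf N)
    (hComm : ∀ g ∈ {g : G | ∀ x ∈ Q, ⁅g, x⁆ ∈ Q ⊓ N}, ∀ x ∈ P, ⁅g, x⁆ ∈ Q ⊓ N) :
    ({g : G | ∀ x ∈ Q, ⁅g, x⁆ ∈ Q ⊓ N} ⊆ {g : G | ∀ x ∈ P, ⁅g, x⁆ ∈ P ⊓ N}) ∧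
    (∀ q ∈ Q, (fun x => q⁻¹ * x * q) '' {g : G | ∀ x ∈ P, ⁅g, x⁆ ∈ P ⊓ N}
        = {g : G | ∀ x ∈ P, ⁅g, x⁆ ∈ P ⊓ N}) ∧
    ({g : G | ∀ x ∈ P, ⁅g, x⁆ ∈ P ⊓ N} * (Q : Set G)
        = (Q : Set G) * {g : G | ∀ x ∈ P, ⁅g, x⁆ ∈ P ⊓ N}) ∧
    (∃ H : Subgroup G, (H : Set G) = {g : G | ∀ x ∈ P, ⁅g, x⁆ ∈ P ⊓ N} * (Q : Set G)) := by
  -- abbreviate the set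
  have hnorm : ∀ g ∈ {g : G | ∀ x ∈ P, ⁅g, x⁆ ∈ P ⊓ N}, ∀ x ∈ P, g * x * g⁻¹ ∈ P := by
    intro g hg x hx
    have h := (Subgroup.mem_inf.mp (hg x hx)).1
    have e : g * x * g⁻¹ = ⁅g, x⁆ * x := by
      simp only [commutatorElement_def]; group
    rw [e]; exact mul_mem h hx
  have hnorm' : ∀ g ∈ {g : G | ∀ x ∈ P, ⁅g, x⁆ ∈ P ⊓ N}, ∀ x ∈ P, g⁻¹ * x * g ∈ P := by
    intro g hg x hx
    have hinj : Function.Injective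
        (fun y : P => (⟨g * y * g⁻¹, hnorm g hg y y.2⟩ : P)) := by
      intro a b hab
      have : g * (a : G) * g⁻¹ = g * (b : G) * g⁻¹ := congrArg Subtype.val hab
      have : (a : G) = (b : G) := by
        have := mul_right_cancel this
        exact mul_left_cancel this
      exact Subtype.ext this
    have hsurj := Finite.surjective_of_injective hinj
    obtain ⟨y, hy⟩ := hsurj ⟨x, hx⟩
    have h1 : g * (y : G) * g⁻¹ = x := congrArg Subtype.val hy
    have h2 : g⁻¹ * x * g = (y : G) := by rw [← h1]; group
    rw [h2]; exact y.2
  have hconjPN : ∀ g ∈ {g : G | ∀ x ∈ P, ⁅g, x⁆ ∈ P ⊓ N}, ∀ y ∈ P ⊓ N,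
      g * y * g⁻¹ ∈ P ⊓ N := by
    intro g hg y hy
    rcases Subgroup.mem_inf.mp hy with ⟨hyP, hyN⟩
    exact Subgroup.mem_inf.mpr ⟨hnorm g hg y hyP, Subgroup.Normal.conj_mem ‹N.Normal› y hyN g⟩
  have hconjPN' : ∀ g ∈ {g : G | ∀ x ∈ P, ⁅g, x⁆ ∈ P ⊓ N}, ∀ y ∈ P ⊓ N,
      g⁻¹ * y * g ∈ P ⊓ N := by
    intro g hg y hy
    rcases Subgroup.mem_inf.mp hy with ⟨hyP, hyN⟩
    refine Subgroup.mem_inf.mpr ⟨hnorm' g hg y hyP, ?_⟩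
    have := Subgroup.Normal.conj_mem ‹N.Normal› y hyN g⁻¹
    simpa using this
  have Smul : ∀ g ∈ {g : G | ∀ x ∈ P, ⁅g, x⁆ ∈ P ⊓ N},
      ∀ h ∈ {g : G | ∀ x ∈ P, ⁅g, x⁆ ∈ P ⊓ N},
      g * h ∈ {g : G | ∀ x ∈ P, ⁅g, x⁆ ∈ P ⊓ N} := by
    intro g hg h hh x hx
    have key : ⁅g * h, x⁆ = (g * ⁅h, x⁆ * g⁻¹) * ⁅g, x⁆ := by
      simp only [commutatorElement_def]; group
    rw [key]
    exact mul_mem (hconjPN g hg _ (hh x hx)) (hg x hx)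
  have Sinv : ∀ g ∈ {g : G | ∀ x ∈ P, ⁅g, x⁆ ∈ P ⊓ N},
      g⁻¹ ∈ {g : G | ∀ x ∈ P, ⁅g, x⁆ ∈ P ⊓ N} := by
    intro g hg x hx
    have key : ⁅g⁻¹, x⁆ = g⁻¹ * ⁅g, x⁆⁻¹ * g := by
      simp only [commutatorElement_def]; group
    rw [key]
    exact hconjPN' g hg _ (inv_mem (hg x hx))
  have Sone : (1 : G) ∈ {g : G | ∀ x ∈ P, ⁅g, x⁆ ∈ P ⊓ N} := by
    intro x hx
    simp only [commutatorElement_def, one_mul, inv_one, mul_one, mul_inv_cancel]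
    exact one_mem _
  have hconj : ∀ q ∈ Q, ∀ g ∈ {g : G | ∀ x ∈ P, ⁅g, x⁆ ∈ P ⊓ N},
      q⁻¹ * g * q ∈ {g : G | ∀ x ∈ P, ⁅g, x⁆ ∈ P ⊓ N} := by
    intro q hq g hg x hx
    have key : ⁅q⁻¹ * g * q, x⁆ = q⁻¹ * ⁅g, q * x * q⁻¹⁆ * q := by
      simp only [commutatorElement_def]; group
    rw [key]
    have hy : ⁅g, q * x * q⁻¹⁆ ∈ P ⊓ N := hg _ (hPnormQ q hq x hx)
    rcases Subgroup.mem_inf.mp hy with ⟨hyP, hyN⟩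
    rw [← hEq]
    refine Subgroup.mem_inf.mpr ⟨?_, ?_⟩
    · exact mul_mem (mul_mem (inv_mem hq) (hPQ hyP)) hq
    · have := Subgroup.Normal.conj_mem ‹N.Normal› _ hyN q⁻¹
      simpa [mul_assoc] using this
  refine ⟨?_, ?_, ?_, ?_⟩
  · -- C_{Q,N} ⊆ C_{P,N}
    intro g hg x hx
    rw [← hEq]
    exact hComm g hg x hx
  · -- Q normalizes
    intro q hq
    ext a
    simp only [Set.mem_image]
    constructor
    · rintro ⟨g, hg, rfl⟩
      exact hconj q hq g hg
    · intro ha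
      refine ⟨q * a * q⁻¹, ?_, by group⟩
      simpa using hconj q⁻¹ (inv_mem hq) a ha
  · -- commuting product
    ext z
    simp only [Set.mem_mul]
    constructor
    · rintro ⟨c, hc, q, hq, rfl⟩
      exact ⟨q, hq, q⁻¹ * c * q, hconj q hq c hc, by group⟩
    · rintro ⟨q, hq, c, hc, rfl⟩
      refine ⟨q * c * q⁻¹, ?_, q, hq, by group⟩
      simpa using hconj q⁻¹ (inv_mem hq) c hc
  · -- the subgroup
    refine ⟨{ carrier := {g : G | ∀ x ∈ P, ⁅g, x⁆ ∈ P ⊓ N} * (Q : Set G),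
              one_mem' := ?_, mul_mem' := ?_, inv_mem' := ?_ }, rfl⟩
    · rintro a b ha hb
      rcases Set.mem_mul.mp ha with ⟨c1, hc1, q1, hq1, rfl⟩
      rcases Set.mem_mul.mp hb with ⟨c2, hc2, q2, hq2, rfl⟩
      refine Set.mem_mul.mpr ⟨c1 * (q1 * c2 * q1⁻¹), ?_, q1 * q2, mul_mem hq1 hq2, by group⟩
      refine Smul c1 hc1 _ ?_
      simpa using hconj q1⁻¹ (inv_mem hq1) c2 hc2
    · exact Set.mem_mul.mpr ⟨1, Sone, 1, Q.one_mem, mul_one 1⟩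
    · rintro a ha
      rcases Set.mem_mul.mp ha with ⟨c, hc, q, hq, rfl⟩
      refine Set.mem_mul.mpr ⟨q⁻¹ * c⁻¹ * q, ?_, q⁻¹, inv_mem hq, by group⟩
      exact hconj q hq c⁻¹ (Sinv c hc)
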